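/- arXiv:1411.4700 — 3 statements merged into one kernel-verified Lean document; each statement's English description precedes it below -/
import Mathlib

section
/- Let α > 0, let x : ℝ → ℝ be bounded and continuous, and for each integer j ≥ 1 define r_j(t) := ∫_{−∞}^t x(s) F_j(t−s) ds. Then each r_j is well-defined (the integrand is integrable on (−∞, t] for every t), and for every integer j ≥ 2 the function r_j is differentiable with r_j'(t) = α(r_{j−1}(t) − r_j(t)) for every t ∈ ℝ. -/
open MeasureTheory

/-- The Gamma kernel `F_k(t) = α^k t^(k-1) e^(-α t) / (k-1)!`. -/
noncomputable def gammaKernel (α : ℝ) (k : ℕ) (t : ℝ) : ℝ :=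
  α ^ k * t ^ (k - 1) * Real.exp (-α * t) / (Nat.factorial (k - 1) : ℝ)

theorem dom_int (α : ℝ) (hα : 0 < α) (m : ℕ) (t : ℝ) :
    IntegrableOn (fun s => Real.exp (α * s) * |s| ^ m) (Set.Iic t) := by
  have h0 : IntegrableOn (fun u => Real.exp (-α * u) * |u| ^ m) (Set.Ioi (-t)) := by
    apply integrable_of_isBigO_exp_neg (b := α/2) (by positivity)
    · exact ((Real.continuous_exp.comp (continuous_const.mul continuous_id)).mul
        ((continuous_abs).pow m)).continuousOn
    · have hto : Filter.Tendsto (fun u : ℝ => Real.exp (-α * u) * |u| ^ m / Real.exp (-(α/2) * u))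
          Filter.atTop (nhds 0) := by
        have : ∀ᶠ u : ℝ in Filter.atTop,
            u ^ (m : ℝ) * Real.exp (-(α/2) * u) = Real.exp (-α * u) * |u| ^ m / Real.exp (-(α/2) * u) := by
          filter_upwards [Filter.eventually_ge_atTop (0:ℝ)] with u hu
          have he : Real.exp (-α*u) = Real.exp (-(α/2)*u) * Real.exp (-(α/2)*u) := by
            rw [← Real.exp_add]; ring_nf
          rw [abs_of_nonneg hu, Real.rpow_natCast, eq_div_iff (Real.exp_ne_zero _), he]
          ring
        exact (Filter.Tendsto.congr' this
          (tendsto_rpow_mul_exp_neg_mul_atTop_nhds_zero m (α/2) (by positivity)))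
      exact Asymptotics.isBigO_of_div_tendsto_nhds
        (by filter_upwards with u h; exact absurd h (Real.exp_ne_zero _)) 0 hto
  rw [← Measure.map_neg_eq_self (volume : Measure ℝ)]
  have me : MeasurableEmbedding fun x : ℝ => -x := (Homeomorph.neg ℝ).measurableEmbedding
  rw [me.integrableOn_map_iff]
  simp only [Function.comp_def, Set.neg_preimage, Set.neg_Iic, abs_neg, mul_neg, ← neg_mul]
  exact (integrableOn_Ici_iff_integrableOn_Ioi).mpr h0

theorem g_int (α : ℝ) (hα : 0 < α) (x : ℝ → ℝ) (hxc : Continuous x)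
    (M : ℝ) (hM : ∀ s, |x s| ≤ M) (m : ℕ) (t : ℝ) :
    IntegrableOn (fun s => x s * Real.exp (α * s) * (-s) ^ m) (Set.Iic t) := by
  apply Integrable.mono' (((dom_int α hα m t).const_mul M))
  · exact ((hxc.mul (Real.continuous_exp.comp (continuous_const.mul continuous_id))).mul
      ((continuous_neg).pow m)).aestronglyMeasurable
  · filter_upwards with s
    have h1 : |x s * Real.exp (α * s) * (-s) ^ m| = |x s| * (Real.exp (α * s) * |s| ^ m) := by
      rw [abs_mul, abs_mul, abs_pow, abs_neg, Real.abs_exp]; ring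
    rw [Real.norm_eq_abs, h1]
    have : (0:ℝ) ≤ Real.exp (α * s) * |s| ^ m := by positivity
    exact mul_le_mul_of_nonneg_right (hM s) this

theorem G_deriv (α : ℝ) (hα : 0 < α) (x : ℝ → ℝ) (hxc : Continuous x)
    (M : ℝ) (hM : ∀ s, |x s| ≤ M) (m : ℕ) (t : ℝ) :
    HasDerivAt (fun τ => ∫ s in Set.Iic τ, x s * Real.exp (α * s) * (-s) ^ m)
      (x t * Real.exp (α * t) * (-t) ^ m) t := by
  set g : ℝ → ℝ := fun s => x s * Real.exp (α * s) * (-s) ^ m with hg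
  have hgc : Continuous g := by
    exact (hxc.mul (Real.continuous_exp.comp (continuous_const.mul continuous_id))).mul
      ((continuous_neg).pow m)
  have key : ∀ τ : ℝ, ∫ s in Set.Iic τ, g s = (∫ s in Set.Iic t, g s) + ∫ s in t..τ, g s := by
    intro τ
    have h1 : IntegrableOn g (Set.Iic t) := g_int α hα x hxc M hM m t
    have h2 : IntegrableOn g (Set.Iic τ) := g_int α hα x hxc M hM m τ
    have := intervalIntegral.integral_Iic_sub_Iic h1 h2
    linarith
  rw [funext key]
  have hd : HasDerivAt (fun τ => ∫ s in t..τ, g s) (g t) t := by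
    apply intervalIntegral.integral_hasDerivAt_right
    · exact (hgc.intervalIntegrable t t)
    · exact hgc.stronglyMeasurable.stronglyMeasurableAtFilter
    · exact hgc.continuousAt
  simpa [Pi.add_def] using (hasDerivAt_const t (∫ s in Set.Iic t, g s)).add hd

theorem pt_eq (α : ℝ) (x : ℝ → ℝ) (n : ℕ) (τ s : ℝ) :
    x s * Real.exp (α * s) * (τ - s) ^ n
      = ∑ k ∈ Finset.range (n+1),
          ((n.choose k : ℝ)) * (τ ^ k * (x s * Real.exp (α * s) * (-s) ^ (n - k))) := by
  rw [sub_eq_add_neg, add_pow, Finset.mul_sum]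
  exact Finset.sum_congr rfl fun k _ => by ring

theorem h_int (α : ℝ) (hα : 0 < α) (x : ℝ → ℝ) (hxc : Continuous x)
    (M : ℝ) (hM : ∀ s, |x s| ≤ M) (n : ℕ) (τ t : ℝ) :
    IntegrableOn (fun s => x s * Real.exp (α * s) * (τ - s) ^ n) (Set.Iic t) := by
  have : (fun s => x s * Real.exp (α * s) * (τ - s) ^ n)
      = fun s => ∑ k ∈ Finset.range (n+1),
          ((n.choose k : ℝ) * τ ^ k) * (x s * Real.exp (α * s) * (-s) ^ (n - k)) := by
    funext s; rw [pt_eq]; exact Finset.sum_congr rfl fun k _ => by ring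
  rw [this]
  exact integrable_finset_sum _ fun k _ => (g_int α hα x hxc M hM (n-k) t).const_mul _

theorem H_eq (α : ℝ) (hα : 0 < α) (x : ℝ → ℝ) (hxc : Continuous x)
    (M : ℝ) (hM : ∀ s, |x s| ≤ M) (n : ℕ) (τ : ℝ) :
    (∫ s in Set.Iic τ, x s * Real.exp (α * s) * (τ - s) ^ n)
      = ∑ k ∈ Finset.range (n+1), (n.choose k : ℝ) *
          (τ ^ k * ∫ s in Set.Iic τ, x s * Real.exp (α * s) * (-s) ^ (n - k)) := by
  simp_rw [pt_eq α x n τ]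
  rw [integral_finset_sum]
  · exact Finset.sum_congr rfl fun k _ => by
      rw [integral_const_mul, integral_const_mul]
  · exact fun k _ => (((g_int α hα x hxc M hM (n-k) τ).const_mul _).const_mul _)

theorem H_deriv (α : ℝ) (hα : 0 < α) (x : ℝ → ℝ) (hxc : Continuous x)
    (M : ℝ) (hM : ∀ s, |x s| ≤ M) (m : ℕ) (t : ℝ) :
    HasDerivAt (fun τ => ∫ s in Set.Iic τ, x s * Real.exp (α * s) * (τ - s) ^ (m+1))
      (((m:ℝ)+1) * ∫ s in Set.Iic t, x s * Real.exp (α * s) * (t - s) ^ m) t := by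
  set G : ℕ → ℝ → ℝ := fun j τ => ∫ s in Set.Iic τ, x s * Real.exp (α * s) * (-s) ^ j with hG
  have hfn : (fun τ => ∫ s in Set.Iic τ, x s * Real.exp (α * s) * (τ - s) ^ (m+1))
      = fun τ => ∑ k ∈ Finset.range (m+2), ((m+1).choose k : ℝ) * (τ ^ k * G (m+1-k) τ) := by
    funext τ; exact H_eq α hα x hxc M hM (m+1) τ
  rw [hfn]
  have hterm : ∀ k ∈ Finset.range (m+2),
      HasDerivAt (fun τ => ((m+1).choose k : ℝ) * (τ ^ k * G (m+1-k) τ))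
        (((m+1).choose k : ℝ) * (((k:ℝ) * t ^ (k-1)) * G (m+1-k) t
          + t ^ k * (x t * Real.exp (α * t) * (-t) ^ (m+1-k)))) t := by
    intro k _
    exact ((hasDerivAt_pow k t).mul (G_deriv α hα x hxc M hM (m+1-k) t)).const_mul _
  have hsum := HasDerivAt.fun_sum hterm
  refine hsum.congr_deriv ?_
  symm
  rw [Finset.sum_congr rfl (fun k _ => mul_add (((m+1).choose k : ℝ)) _ _), Finset.sum_add_distrib]
  have h2 : ∑ k ∈ Finset.range (m+2),
      ((m+1).choose k : ℝ) * (t ^ k * (x t * Real.exp (α * t) * (-t) ^ (m+1-k))) = 0 := by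
    have := pt_eq α x (m+1) t t
    simp only [sub_self] at this
    rw [← this, zero_pow (by omega), mul_zero]
  have h1 : ∑ k ∈ Finset.range (m+2),
      ((m+1).choose k : ℝ) * (((k:ℝ) * t ^ (k-1)) * G (m+1-k) t)
      = ((m:ℝ)+1) * ∑ k ∈ Finset.range (m+1), ((m.choose k : ℝ)) * (t ^ k * G (m-k) t) := by
    rw [Finset.sum_range_succ']
    simp only [Nat.cast_zero, zero_mul, mul_zero, add_zero]
    rw [Finset.mul_sum]
    refine Finset.sum_congr rfl fun k _ => ?_
    have hnat : (m+1).choose (k+1) * (k+1) = (m+1) * m.choose k := by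
      simpa using (Nat.add_one_mul_choose_eq m k).symm
    have hc : ((m+1).choose (k+1) : ℝ) * ((k:ℝ)+1) = ((m:ℝ)+1) * (m.choose k : ℝ) := by
      exact_mod_cast hnat
    simp only [Nat.add_sub_cancel]
    push_cast
    linear_combination (t ^ k * G (m - k) t) * hc
  rw [h2, add_zero, h1, H_eq α hα x hxc M hM m t]

theorem kernel_eq (α : ℝ) (x : ℝ → ℝ) (j : ℕ) (t s : ℝ) :
    x s * gammaKernel α j (t - s)
      = (α ^ j / (Nat.factorial (j-1) : ℝ)) *
          (Real.exp (-(α*t)) * (x s * Real.exp (α*s) * (t-s)^(j-1))) := by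
  unfold gammaKernel
  rw [show -α * (t - s) = -(α*t) + α*s by ring, Real.exp_add]
  ring

/-- Let `α > 0`, let `x : ℝ → ℝ` be bounded and continuous, and for each integer `j ≥ 1`
let `r_j(t) := ∫_{-∞}^t x(s) F_j(t-s) ds`.  Then each `r_j` is well defined (the integrand
is integrable on `(-∞, t]` for every `t`), and for every `j ≥ 2` the function `r_j` is
differentiable with `r_j'(t) = α (r_{j-1}(t) - r_j(t))` for every `t ∈ ℝ`. -/
theorem stmt2 (α : ℝ) (hα : 0 < α) (x : ℝ → ℝ)
    (hxc : Continuous x) (hxb : ∃ M, ∀ s, |x s| ≤ M) :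
    (∀ j : ℕ, 1 ≤ j → ∀ t : ℝ,
      IntegrableOn (fun s => x s * gammaKernel α j (t - s)) (Set.Iic t)) ∧
    (∀ j : ℕ, 2 ≤ j → ∀ t : ℝ,
      HasDerivAt (fun τ => ∫ s in Set.Iic τ, x s * gammaKernel α j (τ - s))
        (α * ((∫ s in Set.Iic t, x s * gammaKernel α (j - 1) (t - s)) -
              ∫ s in Set.Iic t, x s * gammaKernel α j (t - s))) t) := by
  obtain ⟨M, hM⟩ := hxb
  have hint : ∀ j : ℕ, ∀ t : ℝ,
      IntegrableOn (fun s => x s * gammaKernel α j (t - s)) (Set.Iic t) := by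
    intro j t
    have : (fun s => x s * gammaKernel α j (t - s))
        = fun s => (α ^ j / (Nat.factorial (j-1) : ℝ)) *
            (Real.exp (-(α*t)) * (x s * Real.exp (α*s) * (t-s)^(j-1))) := by
      funext s; exact kernel_eq α x j t s
    rw [this]
    exact (((h_int α hα x hxc M hM (j-1) t t).const_mul _).const_mul _)
  refine ⟨fun j _ t => hint j t, ?_⟩
  intro j hj t
  obtain ⟨m, rfl⟩ : ∃ m, j = m + 2 := ⟨j - 2, by omega⟩
  have hIeq : ∀ (n : ℕ) (τ : ℝ),
      (∫ s in Set.Iic τ, x s * gammaKernel α (n+1) (τ - s))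
        = (α ^ (n+1) / (Nat.factorial n : ℝ)) *
            (Real.exp (-(α*τ)) * ∫ s in Set.Iic τ, x s * Real.exp (α*s) * (τ-s)^n) := by
    intro n τ
    simp_rw [kernel_eq α x (n+1) τ, Nat.add_sub_cancel]
    rw [integral_const_mul, integral_const_mul]
  have hfn : (fun τ => ∫ s in Set.Iic τ, x s * gammaKernel α (m+2) (τ - s))
      = fun τ => (α ^ (m+2) / (Nat.factorial (m+1) : ℝ)) *
          (Real.exp (-(α*τ)) * ∫ s in Set.Iic τ, x s * Real.exp (α*s) * (τ-s)^(m+1)) := by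
    funext τ; exact hIeq (m+1) τ
  rw [hfn]
  have hexp : HasDerivAt (fun τ : ℝ => Real.exp (-(α*τ))) (-α * Real.exp (-(α*t))) t := by
    have := ((hasDerivAt_id t).const_mul (-α)).exp
    simpa [neg_mul, mul_comm] using this
  have hH := H_deriv α hα x hxc M hM m t
  have hprod := (hexp.mul hH).const_mul (α ^ (m+2) / (Nat.factorial (m+1) : ℝ))
  refine hprod.congr_deriv ?_
  symm
  rw [show (m + 2 - 1) = m + 1 by omega, hIeq (m+1) t, hIeq m t]
  have hfac : (Nat.factorial (m+1) : ℝ) = ((m:ℝ)+1) * (Nat.factorial m : ℝ) := by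
    rw [Nat.factorial_succ]; push_cast; ring
  rw [hfac]
  have hfpos : (Nat.factorial m : ℝ) ≠ 0 := by positivity
  have hm1 : ((m:ℝ)+1) ≠ 0 := by positivity
  field_simp
  ring
end

section
/- Let α > 0, let x : ℝ → ℝ be bounded and continuous, and let r : ℝ → ℝ be a differentiable function that is bounded on the whole real line and satisfies r'(t) = α(x(t) − r(t)) for every t ∈ ℝ. Then r is given by the convolution formula r(t) = ∫_{−∞}^t α e^{−α(t−s)} x(s) ds for every t ∈ ℝ; that is, any solution of the chain ODE that is bounded on the entire real line also solves the corresponding integral (distributed-delay) equation. -/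
open MeasureTheory

/-- Let `α > 0`, let `x : ℝ → ℝ` be bounded and continuous, and let `r : ℝ → ℝ` be a
differentiable function that is bounded on the whole real line and satisfies
`r'(t) = α (x(t) - r(t))` for every `t ∈ ℝ`.  Then `r` is given by the convolution formula
`r(t) = ∫_{-∞}^t α e^{-α(t-s)} x(s) ds` for every `t ∈ ℝ`: any solution of the chain ODE
that is bounded on the entire real line also solves the corresponding integral
(distributed-delay) equation. -/
theorem stmt3 (α : ℝ) (hα : 0 < α) (x : ℝ → ℝ)
    (hxc : Continuous x) (hxb : ∃ M, ∀ s, |x s| ≤ M)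
    (r : ℝ → ℝ) (hrb : ∃ K, ∀ t, |r t| ≤ K)
    (hr : ∀ t, HasDerivAt r (α * (x t - r t)) t) :
    ∀ t : ℝ, r t = ∫ s in Set.Iic t, α * Real.exp (-α * (t - s)) * x s := by
  obtain ⟨M, hM⟩ := hxb
  obtain ⟨K, hK⟩ := hrb
  have hM0 : 0 ≤ M := (abs_nonneg _).trans (hM 0)
  have hK0 : 0 ≤ K := (abs_nonneg _).trans (hK 0)
  intro t
  set f : ℝ → ℝ := fun s => α * Real.exp (α * s) * x s with hfdef
  have hexpc : Continuous fun s : ℝ => Real.exp (α * s) :=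
    Real.continuous_exp.comp (continuous_const.mul continuous_id)
  have hfc : Continuous f := (continuous_const.mul hexpc).mul hxc
  have hexp' : ∀ s : ℝ, HasDerivAt (fun s => Real.exp (α * s)) (α * Real.exp (α * s)) s := by
    intro s
    have h1 : HasDerivAt (fun s : ℝ => α * s) α s := by
      simpa using (hasDerivAt_id s).const_mul α
    simpa [mul_comm, Function.comp_def] using (Real.hasDerivAt_exp (α * s)).comp s h1
  have hg : ∀ s : ℝ, HasDerivAt (fun s => Real.exp (α * s) * r s) (f s) s := by
    intro s
    have := (hexp' s).mul (hr s)
    refine this.congr_deriv ?_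
    simp [hfdef]; ring
  -- FTC on [u, t]
  have hFTC : ∀ u : ℝ, (∫ s in u..t, f s)
      = Real.exp (α * t) * r t - Real.exp (α * u) * r u := fun u =>
    intervalIntegral.integral_eq_sub_of_hasDerivAt (fun s _ => hg s)
      (hfc.intervalIntegrable u t)
  -- integrability on Iic t
  have hgM : ∀ s : ℝ, HasDerivAt (fun s => M * Real.exp (α * s)) (α * M * Real.exp (α * s)) s := by
    intro s
    have := (hexp' s).const_mul M
    refine this.congr_deriv ?_
    ring
  have hint : IntegrableOn f (Set.Iic t) := by
    apply integrableOn_Iic_of_intervalIntegral_norm_bounded (M * Real.exp (α * t)) t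
      (fun i : ℝ => (hfc.integrableOn_Ioc)) Filter.tendsto_id
    filter_upwards [Filter.eventually_le_atBot t] with u hu
    simp only [id_eq]
    have hcalc : (∫ s in u..t, α * M * Real.exp (α * s))
        = M * Real.exp (α * t) - M * Real.exp (α * u) :=
      intervalIntegral.integral_eq_sub_of_hasDerivAt (fun s _ => hgM s)
        (((continuous_const.mul hexpc)).intervalIntegrable u t)
    have hmono : (∫ s in u..t, ‖f s‖) ≤ ∫ s in u..t, α * M * Real.exp (α * s) := by
      apply intervalIntegral.integral_mono_on hu (hfc.norm.intervalIntegrable u t)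
        ((continuous_const.mul hexpc).intervalIntegrable u t)
      intro s _
      have h1 : ‖f s‖ = α * Real.exp (α * s) * |x s| := by
        simp [hfdef, abs_mul, abs_of_pos hα, abs_of_pos (Real.exp_pos _), Real.norm_eq_abs]
      rw [h1]
      calc α * Real.exp (α * s) * |x s| ≤ α * Real.exp (α * s) * M :=
            mul_le_mul_of_nonneg_left (hM s) (by positivity)
        _ = α * M * Real.exp (α * s) := by ring
    have := Real.exp_pos (α * u)
    nlinarith [hmono, hcalc, mul_nonneg hM0 this.le]
  -- limits
  have hlim1 : Filter.Tendsto (fun u => ∫ s in u..t, f s) Filter.atBot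
      (nhds (∫ s in Set.Iic t, f s)) :=
    intervalIntegral_tendsto_integral_Iic t hint Filter.tendsto_id
  have hexp0 : Filter.Tendsto (fun u : ℝ => Real.exp (α * u)) Filter.atBot (nhds 0) :=
    Real.tendsto_exp_atBot.comp (Filter.Tendsto.const_mul_atBot hα Filter.tendsto_id)
  have h0 : Filter.Tendsto (fun u : ℝ => Real.exp (α * u) * r u) Filter.atBot (nhds 0) := by
    apply squeeze_zero_norm (fun u => ?_) (by simpa using hexp0.const_mul K)
    have h2 : ‖Real.exp (α * u) * r u‖ = Real.exp (α * u) * |r u| := by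
      simp [abs_mul, abs_of_pos (Real.exp_pos _), Real.norm_eq_abs]
    rw [h2, mul_comm K _]
    exact mul_le_mul_of_nonneg_left (hK u) (Real.exp_pos _).le
  have hlim2 : Filter.Tendsto (fun u => ∫ s in u..t, f s) Filter.atBot
      (nhds (Real.exp (α * t) * r t)) := by
    have := (tendsto_const_nhds (x := Real.exp (α * t) * r t)
      (f := Filter.atBot (α := ℝ))).sub h0
    simp only [sub_zero] at this
    exact this.congr fun u => (hFTC u).symm
  have key : (∫ s in Set.Iic t, f s) = Real.exp (α * t) * r t :=
    tendsto_nhds_unique hlim1 hlim2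
  -- rewrite the target integral
  have htgt : (∫ s in Set.Iic t, α * Real.exp (-α * (t - s)) * x s)
      = Real.exp (-(α * t)) * ∫ s in Set.Iic t, f s := by
    rw [← integral_const_mul]
    apply setIntegral_congr_fun measurableSet_Iic
    intro s _
    simp only [hfdef]
    rw [show -α * (t - s) = -(α * t) + α * s by ring, Real.exp_add]
    ring
  rw [htgt, key, ← mul_assoc, ← Real.exp_add]
  simp
end

section
/- Let d, d', m be positive integers, write u = (x, y) ∈ ℝ^d × ℝ^{d'}, and let V : ℝ^d × ℝ^{d'} → [0,∞) be continuously differentiable. Let f₁ : ℝ^d → ℝ^d, f₂ : ℝ^{d'} → ℝ^{d'}, g₁ : ℝ^{d+d'} → ℝ^d, g₂ : ℝ^{d+d'} → ℝ^{d'}, h̃ : ℝ^{d+d'} × ℝ^m → ℝ^m be continuous; let D be a real m×m matrix with ⟨D r, r⟩ ≥ λ‖r‖² for all r ∈ ℝ^m and some λ > 0; let Π : ℝ^m → ℝ^{d'} be linear with ‖Π w‖ ≤ ‖w‖ for all w. Assume there exist constants α, β, a, b, m₁, m₂, γ, C₀ ≥ 0 with: (H1) ⟨f₁(x), ∇_x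 V(u)⟩ + ⟨f₂(y), ∇_y V(u)⟩ + α V(u) ≤ β for all u; (H2) ⟨g₁(u), ∇_x V(u)⟩ + ⟨g₂(u), ∇_y V(u)⟩ ≤ a V(u) + b for all u; (H3) ⟨Π r, ∇_y V(u)⟩ + ⟨h̃(u, r), r⟩ ≤ m₁ V(u) + m₂ ‖r‖² for all (u, r); (H4) ‖∇_y V(u)‖² ≤ γ V(u) + C₀ for all u. Let z : [0,∞) → ℝ^m be continuous and let (x, y, r) : [0,∞) → ℝ^d × ℝ^{d'} × ℝ^m be differentiable and satisfy x' = f₁(x) + g₁(u), y' = f₂(y) + g₂(u) + Π(r + z(t)), r' = −D r + h̃(u, r) + D z(t). Then for every ε > 0 there exists a constant C_ε ≥ 0 such that, setting Ṽ(t) := V(u(t)) + ½‖r(t)‖² and κ_ε := min(α − a − m₁ − ε γ, 2(λ − m₂ − ε)), one has Ṽ'(t) + κ_ε Ṽ(t) ≤ β + b + ε C₀ + C_ε ‖z(t)‖² for every t ≥ 0. -/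
open MeasureTheory

section aux

variable {E : Type*} [NormedAddCommGroup E] [InnerProductSpace ℝ E] [CompleteSpace E]

lemma inner_gradient_eq_fderiv {f : E → ℝ} {x v : E} :
    (inner ℝ (gradient f x) v : ℝ) = fderiv ℝ f x v := by
  unfold gradient
  rw [InnerProductSpace.toDual_symm_apply]

lemma young_ineq (ε A B : ℝ) (hε : 0 < ε) : A * B ≤ ε * A ^ 2 + B ^ 2 / (4 * ε) := by
  rw [← sub_nonneg]
  have : ε * A ^ 2 + B ^ 2 / (4 * ε) - A * B = (2 * ε * A - B) ^ 2 / (4 * ε) := by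
    field_simp; ring
  rw [this]
  positivity

end aux

/-- Deterministic energy estimate behind the existence of a global random attractor for
multilayer stochastic models.  Under the dissipativity hypotheses (H1)–(H4) on the
Lyapunov function `V`, on the self-interactions `f₁, f₂`, the cross-interactions
`g₁, g₂`, the last-layer nonlinearity `h̃`, the positive-definite drift `D` and the
projection `Π`, every trajectory of the transformed (pathwise) system satisfies, for each
`ε > 0` and a suitable constant `C_ε ≥ 0`, the differential inequality
`Ṽ'(t) + κ_ε Ṽ(t) ≤ β + b + ε C₀ + C_ε ‖z(t)‖²`, where
`Ṽ(t) = V(u(t)) + ‖r(t)‖²/2` and `κ_ε = min (α - a - m₁ - ε γ) (2 (λ - m₂ - ε))`. -/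
theorem stmt6 {d d' m : ℕ} (hd : 0 < d) (hd' : 0 < d') (hm : 0 < m)
    (V : EuclideanSpace ℝ (Fin d) × EuclideanSpace ℝ (Fin d') → ℝ)
    (hV : ContDiff ℝ 1 V) (hVnn : ∀ u, 0 ≤ V u)
    (f₁ : EuclideanSpace ℝ (Fin d) → EuclideanSpace ℝ (Fin d)) (hf₁ : Continuous f₁)
    (f₂ : EuclideanSpace ℝ (Fin d') → EuclideanSpace ℝ (Fin d')) (hf₂ : Continuous f₂)
    (g₁ : EuclideanSpace ℝ (Fin d) × EuclideanSpace ℝ (Fin d') → EuclideanSpace ℝ (Fin d))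
    (hg₁ : Continuous g₁)
    (g₂ : EuclideanSpace ℝ (Fin d) × EuclideanSpace ℝ (Fin d') → EuclideanSpace ℝ (Fin d'))
    (hg₂ : Continuous g₂)
    (htil : (EuclideanSpace ℝ (Fin d) × EuclideanSpace ℝ (Fin d')) × EuclideanSpace ℝ (Fin m)
      → EuclideanSpace ℝ (Fin m)) (hhtil : Continuous htil)
    (D : EuclideanSpace ℝ (Fin m) →ₗ[ℝ] EuclideanSpace ℝ (Fin m))
    (lam : ℝ) (hlam : 0 < lam)
    (hD : ∀ w : EuclideanSpace ℝ (Fin m), lam * ‖w‖ ^ 2 ≤ (inner ℝ (D w) w : ℝ))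
    (Pr : EuclideanSpace ℝ (Fin m) →ₗ[ℝ] EuclideanSpace ℝ (Fin d'))
    (hPr : ∀ w, ‖Pr w‖ ≤ ‖w‖)
    (α β a b m₁ m₂ γ C₀ : ℝ)
    (hα : 0 ≤ α) (hβ : 0 ≤ β) (ha : 0 ≤ a) (hb : 0 ≤ b) (hm₁ : 0 ≤ m₁)
    (hm₂ : 0 ≤ m₂) (hγ : 0 ≤ γ) (hC₀ : 0 ≤ C₀)
    (H1 : ∀ u : EuclideanSpace ℝ (Fin d) × EuclideanSpace ℝ (Fin d'),
      (inner ℝ (f₁ u.1) (gradient (fun x' => V (x', u.2)) u.1) : ℝ)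
        + (inner ℝ (f₂ u.2) (gradient (fun y' => V (u.1, y')) u.2) : ℝ) + α * V u ≤ β)
    (H2 : ∀ u : EuclideanSpace ℝ (Fin d) × EuclideanSpace ℝ (Fin d'),
      (inner ℝ (g₁ u) (gradient (fun x' => V (x', u.2)) u.1) : ℝ)
        + (inner ℝ (g₂ u) (gradient (fun y' => V (u.1, y')) u.2) : ℝ) ≤ a * V u + b)
    (H3 : ∀ (u : EuclideanSpace ℝ (Fin d) × EuclideanSpace ℝ (Fin d'))
        (w : EuclideanSpace ℝ (Fin m)),
      (inner ℝ (Pr w) (gradient (fun y' => V (u.1, y')) u.2) : ℝ)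
        + (inner ℝ (htil (u, w)) w : ℝ) ≤ m₁ * V u + m₂ * ‖w‖ ^ 2)
    (H4 : ∀ u : EuclideanSpace ℝ (Fin d) × EuclideanSpace ℝ (Fin d'),
      ‖gradient (fun y' => V (u.1, y')) u.2‖ ^ 2 ≤ γ * V u + C₀)
    (z : ℝ → EuclideanSpace ℝ (Fin m)) (hz : Continuous z)
    (x : ℝ → EuclideanSpace ℝ (Fin d)) (y : ℝ → EuclideanSpace ℝ (Fin d'))
    (r : ℝ → EuclideanSpace ℝ (Fin m))
    (hx : ∀ t ∈ Set.Ici (0 : ℝ),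
      HasDerivWithinAt x (f₁ (x t) + g₁ (x t, y t)) (Set.Ici 0) t)
    (hy : ∀ t ∈ Set.Ici (0 : ℝ),
      HasDerivWithinAt y (f₂ (y t) + g₂ (x t, y t) + Pr (r t + z t)) (Set.Ici 0) t)
    (hr : ∀ t ∈ Set.Ici (0 : ℝ),
      HasDerivWithinAt r (-(D (r t)) + htil ((x t, y t), r t) + D (z t)) (Set.Ici 0) t) :
    ∀ ε > (0 : ℝ), ∃ Cε : ℝ, 0 ≤ Cε ∧
      ∀ t ∈ Set.Ici (0 : ℝ), ∀ v : ℝ,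
        HasDerivWithinAt (fun τ => V (x τ, y τ) + ‖r τ‖ ^ 2 / 2) v (Set.Ici 0) t →
        v + min (α - a - m₁ - ε * γ) (2 * (lam - m₂ - ε)) *
            (V (x t, y t) + ‖r t‖ ^ 2 / 2)
          ≤ β + b + ε * C₀ + Cε * ‖z t‖ ^ 2 := by
  intro ε hε
  set Dc : EuclideanSpace ℝ (Fin m) →L[ℝ] EuclideanSpace ℝ (Fin m) :=
    LinearMap.toContinuousLinearMap D with hDc
  refine ⟨1 / (4 * ε) + ‖Dc‖ ^ 2 / (4 * ε), by positivity, ?_⟩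
  intro t ht v hv
  -- notation
  set P := x t
  set Q := y t
  set R := r t
  set Z := z t
  set Gx := gradient (fun x' => V (x', Q)) P with hGx
  set Gy := gradient (fun y' => V (P, y')) Q with hGy
  set X' := f₁ P + g₁ (P, Q) with hX'
  set Y' := f₂ Q + g₂ (P, Q) + Pr (R + Z) with hY'
  set R' := -(D R) + htil ((P, Q), R) + D Z with hR'
  have hVd : DifferentiableAt ℝ V (P, Q) :=
    (hV.differentiable one_ne_zero).differentiableAt
  -- gradient facts
  have hgradx : ∀ w, (inner ℝ Gx w : ℝ) = fderiv ℝ V (P, Q) (w, 0) := by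
    intro w
    rw [hGx, inner_gradient_eq_fderiv]
    have : fderiv ℝ (fun x' => V (x', Q)) P =
        (fderiv ℝ V (P, Q)).comp (ContinuousLinearMap.inl ℝ _ _) :=
      (hVd.hasFDerivAt.comp P (hasFDerivAt_prodMk_left P Q)).fderiv
    rw [this]; rfl
  have hgrady : ∀ w, (inner ℝ Gy w : ℝ) = fderiv ℝ V (P, Q) (0, w) := by
    intro w
    rw [hGy, inner_gradient_eq_fderiv]
    have : fderiv ℝ (fun y' => V (P, y')) Q =
        (fderiv ℝ V (P, Q)).comp (ContinuousLinearMap.inr ℝ _ _) :=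
      (hVd.hasFDerivAt.comp Q (hasFDerivAt_prodMk_right P Q)).fderiv
    rw [this]; rfl
  -- the derivative of the energy
  have hu : HasDerivWithinAt (fun τ => (x τ, y τ)) (X', Y') (Set.Ici 0) t :=
    (hx t ht).prodMk (hy t ht)
  have hVcomp : HasDerivWithinAt (fun τ => V (x τ, y τ))
      (fderiv ℝ V (P, Q) (X', Y')) (Set.Ici 0) t :=
    hVd.hasFDerivAt.comp_hasDerivWithinAt t hu
  have hrr : HasDerivWithinAt (fun τ => (inner ℝ (r τ) (r τ) : ℝ))
      ((inner ℝ R R' : ℝ) + (inner ℝ R' R : ℝ)) (Set.Ici 0) t :=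
    (hr t ht).inner ℝ (hr t ht)
  have hnorm : HasDerivWithinAt (fun τ => ‖r τ‖ ^ 2 / 2)
      (inner ℝ R' R : ℝ) (Set.Ici 0) t := by
    have : HasDerivWithinAt (fun τ => (inner ℝ (r τ) (r τ) : ℝ) / 2)
        (((inner ℝ R R' : ℝ) + (inner ℝ R' R : ℝ)) / 2) (Set.Ici 0) t := hrr.div_const 2
    have h2 : ((inner ℝ R R' : ℝ) + (inner ℝ R' R : ℝ)) / 2 = (inner ℝ R' R : ℝ) := by
      rw [real_inner_comm R R']; ring
    rw [h2] at this
    refine this.congr (fun τ _ => by rw [real_inner_self_eq_norm_sq])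
      (by rw [real_inner_self_eq_norm_sq])
  have hVtil : HasDerivWithinAt (fun τ => V (x τ, y τ) + ‖r τ‖ ^ 2 / 2)
      (fderiv ℝ V (P, Q) (X', Y') + (inner ℝ R' R : ℝ)) (Set.Ici 0) t :=
    hVcomp.add hnorm
  -- uniqueness of the derivative
  have hveq : v = fderiv ℝ V (P, Q) (X', Y') + (inner ℝ R' R : ℝ) := by
    have hud : UniqueDiffWithinAt ℝ (Set.Ici (0 : ℝ)) t := uniqueDiffOn_Ici 0 t ht
    rw [← hv.derivWithin hud, ← hVtil.derivWithin hud]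
  -- decompose the derivative
  have hsplit : fderiv ℝ V (P, Q) (X', Y')
      = (inner ℝ Gx X' : ℝ) + (inner ℝ Gy Y' : ℝ) := by
    rw [hgradx, hgrady, ← map_add]
    congr 1
    simp [Prod.mk_add_mk]
  have hAexp : v = (inner ℝ (f₁ P) Gx : ℝ) + (inner ℝ (f₂ Q) Gy : ℝ)
      + ((inner ℝ (g₁ (P, Q)) Gx : ℝ) + (inner ℝ (g₂ (P, Q)) Gy : ℝ))
      + ((inner ℝ (Pr R) Gy : ℝ) + (inner ℝ (htil ((P, Q), R)) R : ℝ))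
      + (inner ℝ (Pr Z) Gy : ℝ)
      - (inner ℝ (D R) R : ℝ) + (inner ℝ (D Z) R : ℝ) := by
    rw [hveq, hsplit, hX', hY', hR']
    rw [map_add Pr]
    simp only [inner_add_left, inner_add_right, inner_neg_left]
    rw [real_inner_comm Gx (f₁ P), real_inner_comm Gx (g₁ (P, Q)),
      real_inner_comm Gy (f₂ Q), real_inner_comm Gy (g₂ (P, Q)),
      real_inner_comm Gy (Pr R), real_inner_comm Gy (Pr Z)]
    ring
  -- bounds
  have h1 : (inner ℝ (f₁ P) Gx : ℝ) + (inner ℝ (f₂ Q) Gy : ℝ) ≤ β - α * V (P, Q) := by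
    have := H1 (P, Q); simp only [← hGx, ← hGy] at this ⊢; linarith
  have h2 : (inner ℝ (g₁ (P, Q)) Gx : ℝ) + (inner ℝ (g₂ (P, Q)) Gy : ℝ)
      ≤ a * V (P, Q) + b := H2 (P, Q)
  have h3 : (inner ℝ (Pr R) Gy : ℝ) + (inner ℝ (htil ((P, Q), R)) R : ℝ)
      ≤ m₁ * V (P, Q) + m₂ * ‖R‖ ^ 2 := H3 (P, Q) R
  have h4 : (inner ℝ (Pr Z) Gy : ℝ) ≤ ε * (γ * V (P, Q) + C₀) + ‖Z‖ ^ 2 / (4 * ε) := by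
    have hle : (inner ℝ (Pr Z) Gy : ℝ) ≤ ‖Gy‖ * ‖Z‖ := by
      calc (inner ℝ (Pr Z) Gy : ℝ) ≤ ‖Pr Z‖ * ‖Gy‖ := real_inner_le_norm _ _
        _ ≤ ‖Z‖ * ‖Gy‖ := by
            exact mul_le_mul_of_nonneg_right (hPr Z) (norm_nonneg _)
        _ = ‖Gy‖ * ‖Z‖ := by ring
    have hy2 := young_ineq ε ‖Gy‖ ‖Z‖ hε
    have h4' := H4 (P, Q)
    have : ε * ‖Gy‖ ^ 2 ≤ ε * (γ * V (P, Q) + C₀) :=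
      mul_le_mul_of_nonneg_left h4' hε.le
    linarith
  have h5 : -(inner ℝ (D R) R : ℝ) ≤ -(lam * ‖R‖ ^ 2) := by linarith [hD R]
  have h6 : (inner ℝ (D Z) R : ℝ) ≤ ε * ‖R‖ ^ 2 + ‖Dc‖ ^ 2 * ‖Z‖ ^ 2 / (4 * ε) := by
    have hDZ : ‖D Z‖ ≤ ‖Dc‖ * ‖Z‖ := Dc.le_opNorm Z
    have hle : (inner ℝ (D Z) R : ℝ) ≤ ‖R‖ * (‖Dc‖ * ‖Z‖) := by
      calc (inner ℝ (D Z) R : ℝ) ≤ ‖D Z‖ * ‖R‖ := real_inner_le_norm _ _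
        _ ≤ (‖Dc‖ * ‖Z‖) * ‖R‖ :=
            mul_le_mul_of_nonneg_right hDZ (norm_nonneg _)
        _ = ‖R‖ * (‖Dc‖ * ‖Z‖) := by ring
    have hy2 := young_ineq ε ‖R‖ (‖Dc‖ * ‖Z‖) hε
    calc (inner ℝ (D Z) R : ℝ) ≤ ε * ‖R‖ ^ 2 + (‖Dc‖ * ‖Z‖) ^ 2 / (4 * ε) := le_trans hle hy2
      _ = ε * ‖R‖ ^ 2 + ‖Dc‖ ^ 2 * ‖Z‖ ^ 2 / (4 * ε) := by ring
  -- combine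
  have hvle : v ≤ β + b + ε * C₀ + (a + m₁ + ε * γ - α) * V (P, Q)
      + (m₂ + ε - lam) * ‖R‖ ^ 2
      + (1 / (4 * ε) + ‖Dc‖ ^ 2 / (4 * ε)) * ‖Z‖ ^ 2 := by
    rw [hAexp]
    have : (1 / (4 * ε) + ‖Dc‖ ^ 2 / (4 * ε)) * ‖Z‖ ^ 2
        = ‖Z‖ ^ 2 / (4 * ε) + ‖Dc‖ ^ 2 * ‖Z‖ ^ 2 / (4 * ε) := by ring
    rw [this]
    linarith
  set κ := min (α - a - m₁ - ε * γ) (2 * (lam - m₂ - ε)) with hκ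
  have hκ1 : κ * V (P, Q) ≤ (α - a - m₁ - ε * γ) * V (P, Q) :=
    mul_le_mul_of_nonneg_right (min_le_left _ _) (hVnn _)
  have hκ2 : κ * (‖R‖ ^ 2 / 2) ≤ (lam - m₂ - ε) * ‖R‖ ^ 2 := by
    have hmin : κ ≤ 2 * (lam - m₂ - ε) := min_le_right _ _
    have h := mul_le_mul_of_nonneg_right hmin
      (show (0:ℝ) ≤ ‖R‖ ^ 2 / 2 by positivity)
    linarith
  have : κ * (V (P, Q) + ‖R‖ ^ 2 / 2) = κ * V (P, Q) + κ * (‖R‖ ^ 2 / 2) := by ring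
  rw [this]
  linarith
end
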